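/- For every n ≥ 4, every proper 3-coloring ψ of the subgraph C_1 ∪ C_2 of the reduced Thomas-Walls graph T'_n that is non-dangerous on C_1 or non-dangerous on C_2 (i.e., ψ(u_1) = ψ(u_3) and ψ(u_2) ≠ ψ(u_4), or ψ(v_1) = ψ(v_3) and ψ(v_2) ≠ ψ(v_4)) extends to a proper 3-coloring of T'_n. -/

import Mathlib

open SimpleGraph

/-- Pairs of natural numbers encoding the edges of the Thomas-Walls graph `T_n`.
The recursive construction (T_1 = K_4; T_{m+1} obtained from T_m by deleting the edge
`a_m b_m`, which lies in two triangles, and adding vertices `x_m, y_m, z_m` with edges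
`a_m x_m, b_m y_m, b_m z_m, x_m y_m, x_m z_m, y_m z_m`) is realized explicitly with
vertex `0 = c`, `1 = d`, `3k-1 = a_k`, `3k = b_k`, `3k+1 = x_k`, where `a_{k+1} = y_k`
and `b_{k+1} = z_k`; `T_1` is `K_4` on `{c, d, a_1, b_1}`. -/
def twPairs (n : ℕ) : Set (ℕ × ℕ) :=
  {p | p = (0, 2) ∨ p = (0, 3) ∨ p = (1, 2) ∨ p = (1, 3) ∨ p = (0, 1) ∨
       p = (3 * n - 1, 3 * n) ∨
       ∃ k, 1 ≤ k ∧ k < n ∧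
         (p = (3 * k - 1, 3 * k + 1) ∨ p = (3 * k, 3 * k + 2) ∨ p = (3 * k, 3 * k + 3) ∨
          p = (3 * k + 1, 3 * k + 2) ∨ p = (3 * k + 1, 3 * k + 3))}

/-- The Thomas-Walls graph `T_n` (for `n ≥ 1`), on the `3n + 1` vertices `0, …, 3n`. -/
def thomasWalls (n : ℕ) : SimpleGraph (Fin (3 * n + 1)) :=
  SimpleGraph.fromRel fun i j => ((i : ℕ), (j : ℕ)) ∈ twPairs n

/-- The reduced Thomas-Walls graph `T'_n = T_n − {u₁u₃, v₁v₃}` (for `n ≥ 2`). -/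
def reducedThomasWalls (n : ℕ) : SimpleGraph (Fin (3 * n + 1)) :=
  SimpleGraph.fromRel fun i j =>
    ((i : ℕ), (j : ℕ)) ∈ twPairs n \ ({(0, 1), (3 * n - 1, 3 * n)} : Set (ℕ × ℕ))

/-- The vertex of `T_n` with index `k` (for `k ≤ 3n`). -/
def twV (n k : ℕ) : Fin (3 * n + 1) := ⟨k % (3 * n + 1), Nat.mod_lt _ (by omega)⟩

/-- `u₁ = c`: a vertex of the 4-cycle `C₁ = u₁u₂u₃u₄` of `T_n` with `u₁u₃ ∈ E(T_n)`. -/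
def tw_u1 (n : ℕ) : Fin (3 * n + 1) := twV n 0
/-- `u₂ = a₁`. -/
def tw_u2 (n : ℕ) : Fin (3 * n + 1) := twV n 2
/-- `u₃ = d`. -/
def tw_u3 (n : ℕ) : Fin (3 * n + 1) := twV n 1
/-- `u₄ = b₁`. -/
def tw_u4 (n : ℕ) : Fin (3 * n + 1) := twV n 3
/-- `v₁ = y_{n-1}`: a vertex of the 4-cycle `C₂ = v₁v₂v₃v₄` of `T_n` with `v₁v₃ ∈ E(T_n)`. -/
def tw_v1 (n : ℕ) : Fin (3 * n + 1) := twV n (3 * n - 1)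
/-- `v₂ = x_{n-1}`. -/
def tw_v2 (n : ℕ) : Fin (3 * n + 1) := twV n (3 * n - 2)
/-- `v₃ = z_{n-1}`. -/
def tw_v3 (n : ℕ) : Fin (3 * n + 1) := twV n (3 * n)
/-- `v₄ = b_{n-1}`. -/
def tw_v4 (n : ℕ) : Fin (3 * n + 1) := twV n (3 * n - 3)

/-- A color distinct from both `a` and `b`. -/
def oth2 (a b : Fin 3) : Fin 3 :=
  if a ≠ 0 ∧ b ≠ 0 then 0 else if a ≠ 1 ∧ b ≠ 1 then 1 else 2

lemma oth2_ne_left (a b : Fin 3) : oth2 a b ≠ a := by revert a b; decide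
lemma oth2_ne_right (a b : Fin 3) : oth2 a b ≠ b := by revert a b; decide

def gcol (c0 c1 : Fin 3) (A B X : ℕ → Fin 3) (i : ℕ) : Fin 3 :=
  if i = 0 then c0 else if i = 1 then c1 else
  if i % 3 = 2 then A ((i + 1) / 3) else if i % 3 = 0 then B (i / 3) else X ((i - 1) / 3)

lemma gcol_a (c0 c1 : Fin 3) (A B X : ℕ → Fin 3) {k : ℕ} (hk : 1 ≤ k) :
    gcol c0 c1 A B X (3 * k - 1) = A k := by
  have e0 : 3 * k - 1 ≠ 0 := by omega
  have e1 : 3 * k - 1 ≠ 1 := by omega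
  have e2 : (3 * k - 1) % 3 = 2 := by omega
  have e3 : (3 * k - 1 + 1) / 3 = k := by omega
  simp [gcol, e0, e1, e2, e3]

lemma gcol_b (c0 c1 : Fin 3) (A B X : ℕ → Fin 3) {k : ℕ} (hk : 1 ≤ k) :
    gcol c0 c1 A B X (3 * k) = B k := by
  have e0 : 3 * k ≠ 0 := by omega
  have e1 : 3 * k ≠ 1 := by omega
  have e2 : (3 * k) % 3 ≠ 2 := by omega
  have e2' : (3 * k) % 3 = 0 := by omega
  have e3 : 3 * k / 3 = k := by omega
  simp [gcol, e0, e1, e2, e2', e3]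

lemma gcol_x (c0 c1 : Fin 3) (A B X : ℕ → Fin 3) {k : ℕ} (hk : 1 ≤ k) :
    gcol c0 c1 A B X (3 * k + 1) = X k := by
  have e0 : 3 * k + 1 ≠ 0 := by omega
  have e1 : 3 * k + 1 ≠ 1 := by omega
  have e2 : (3 * k + 1) % 3 ≠ 2 := by omega
  have e2' : (3 * k + 1) % 3 ≠ 0 := by omega
  have e3 : (3 * k + 1 - 1) / 3 = k := by omega
  simp [gcol, e0, e1, e2, e2', e3, show k ≠ 0 by omega]

lemma gcol_proper (n : ℕ) (c0 c1 : Fin 3) (A B X : ℕ → Fin 3)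
    (e1 : c0 ≠ A 1) (e2 : c0 ≠ B 1) (e3 : c1 ≠ A 1) (e4 : c1 ≠ B 1)
    (eA : ∀ k, 1 ≤ k → k < n → A k ≠ X k)
    (eB1 : ∀ k, 1 ≤ k → k < n → B k ≠ A (k + 1))
    (eB2 : ∀ k, 1 ≤ k → k < n → B k ≠ B (k + 1))
    (eX1 : ∀ k, 1 ≤ k → k < n → X k ≠ A (k + 1))
    (eX2 : ∀ k, 1 ≤ k → k < n → X k ≠ B (k + 1)) :
    ∀ a b : Fin (3 * n + 1), (reducedThomasWalls n).Adj a b →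
      gcol c0 c1 A B X a.val ≠ gcol c0 c1 A B X b.val := by
  have key : ∀ i j : ℕ, (i, j) ∈ twPairs n →
      ((i, j) : ℕ × ℕ) ∉ ({(0, 1), (3 * n - 1, 3 * n)} : Set (ℕ × ℕ)) →
      gcol c0 c1 A B X i ≠ gcol c0 c1 A B X j := by
    intro i j hm hs
    simp only [Set.mem_insert_iff, Set.mem_singleton_iff, Prod.mk.injEq, not_or] at hs
    obtain ⟨hs1, hs2⟩ := hs
    simp only [twPairs, Set.mem_setOf_eq, Prod.mk.injEq] at hm
    have g2 : gcol c0 c1 A B X 2 = A 1 := by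
      have := gcol_a c0 c1 A B X (k := 1) le_rfl; norm_num at this; exact this
    have g3 : gcol c0 c1 A B X 3 = B 1 := by
      have := gcol_b c0 c1 A B X (k := 1) le_rfl; norm_num at this; exact this
    rcases hm with ⟨hi, hj⟩ | ⟨hi, hj⟩ | ⟨hi, hj⟩ | ⟨hi, hj⟩ | ⟨hi, hj⟩ | ⟨hi, hj⟩ |
      ⟨k, hk1, hk2, ⟨hi, hj⟩ | ⟨hi, hj⟩ | ⟨hi, hj⟩ | ⟨hi, hj⟩ | ⟨hi, hj⟩⟩
    · subst hi; subst hj; rw [g2]; exact e1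
    · subst hi; subst hj; rw [g3]; exact e2
    · subst hi; subst hj; rw [g2]; exact e3
    · subst hi; subst hj; rw [g3]; exact e4
    · exact absurd ⟨hi, hj⟩ hs1
    · exact absurd ⟨hi, hj⟩ hs2
    · subst hi; subst hj
      rw [gcol_a c0 c1 A B X hk1, gcol_x c0 c1 A B X hk1]; exact eA k hk1 hk2
    · subst hi; subst hj
      rw [gcol_b c0 c1 A B X hk1, show 3 * k + 2 = 3 * (k + 1) - 1 by omega,
        gcol_a c0 c1 A B X (by omega)]
      exact eB1 k hk1 hk2
    · subst hi; subst hj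
      rw [gcol_b c0 c1 A B X hk1, show 3 * k + 3 = 3 * (k + 1) by omega,
        gcol_b c0 c1 A B X (by omega)]
      exact eB2 k hk1 hk2
    · subst hi; subst hj
      rw [gcol_x c0 c1 A B X hk1, show 3 * k + 2 = 3 * (k + 1) - 1 by omega,
        gcol_a c0 c1 A B X (by omega)]
      exact eX1 k hk1 hk2
    · subst hi; subst hj
      rw [gcol_x c0 c1 A B X hk1, show 3 * k + 3 = 3 * (k + 1) by omega,
        gcol_b c0 c1 A B X (by omega)]
      exact eX2 k hk1 hk2
  intro a b hab
  simp only [reducedThomasWalls, SimpleGraph.fromRel_adj] at hab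
  rcases hab.2 with h | h
  · exact key _ _ h.1 h.2
  · exact Ne.symm (key _ _ h.1 h.2)


lemma gcol_extend (n : ℕ) (hn : 4 ≤ n) (ψ : Fin (3 * n + 1) → Fin 3) (A B X : ℕ → Fin 3)
    (e1 : ψ (tw_u1 n) ≠ A 1) (e2 : ψ (tw_u1 n) ≠ B 1)
    (e3 : ψ (tw_u3 n) ≠ A 1) (e4 : ψ (tw_u3 n) ≠ B 1)
    (eA : ∀ k, 1 ≤ k → k < n → A k ≠ X k)
    (eB1 : ∀ k, 1 ≤ k → k < n → B k ≠ A (k + 1))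
    (eB2 : ∀ k, 1 ≤ k → k < n → B k ≠ B (k + 1))
    (eX1 : ∀ k, 1 ≤ k → k < n → X k ≠ A (k + 1))
    (eX2 : ∀ k, 1 ≤ k → k < n → X k ≠ B (k + 1))
    (fA1 : A 1 = ψ (tw_u2 n)) (fB1 : B 1 = ψ (tw_u4 n))
    (fAn : A n = ψ (tw_v1 n)) (fBn : B n = ψ (tw_v3 n))
    (fBn1 : B (n - 1) = ψ (tw_v4 n)) (fXn1 : X (n - 1) = ψ (tw_v2 n)) :
    ∃ φ : Fin (3 * n + 1) → Fin 3,
      (∀ a b, (reducedThomasWalls n).Adj a b → φ a ≠ φ b) ∧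
      φ (tw_u1 n) = ψ (tw_u1 n) ∧ φ (tw_u2 n) = ψ (tw_u2 n) ∧
      φ (tw_u3 n) = ψ (tw_u3 n) ∧ φ (tw_u4 n) = ψ (tw_u4 n) ∧
      φ (tw_v1 n) = ψ (tw_v1 n) ∧ φ (tw_v2 n) = ψ (tw_v2 n) ∧
      φ (tw_v3 n) = ψ (tw_v3 n) ∧ φ (tw_v4 n) = ψ (tw_v4 n) := by
  have hval : ∀ m : ℕ, m ≤ 3 * n → (twV n m).val = m := by
    intro m hm; simp [twV]; omega
  have hu1 : (tw_u1 n).val = 0 := hval 0 (by omega)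
  have hu2 : (tw_u2 n).val = 2 := hval 2 (by omega)
  have hu3 : (tw_u3 n).val = 1 := hval 1 (by omega)
  have hu4 : (tw_u4 n).val = 3 := hval 3 (by omega)
  have hv1 : (tw_v1 n).val = 3 * n - 1 := hval _ (by omega)
  have hv2 : (tw_v2 n).val = 3 * n - 2 := hval _ (by omega)
  have hv3 : (tw_v3 n).val = 3 * n := hval _ (by omega)
  have hv4 : (tw_v4 n).val = 3 * n - 3 := hval _ (by omega)
  set c0 := ψ (tw_u1 n) with hc0
  set c1 := ψ (tw_u3 n) with hc1
  have g2 : gcol c0 c1 A B X 2 = A 1 := by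
    have := gcol_a c0 c1 A B X (k := 1) le_rfl; norm_num at this; exact this
  have g3 : gcol c0 c1 A B X 3 = B 1 := by
    have := gcol_b c0 c1 A B X (k := 1) le_rfl; norm_num at this; exact this
  refine ⟨fun v => gcol c0 c1 A B X v.val,
    gcol_proper n c0 c1 A B X e1 e2 e3 e4 eA eB1 eB2 eX1 eX2, ?_, ?_, ?_, ?_, ?_, ?_, ?_, ?_⟩
  · simp only []; rw [hu1]; simp [gcol]
  · simp only []; rw [hu2, g2]; exact fA1
  · simp only []; rw [hu3]; simp [gcol]
  · simp only []; rw [hu4, g3]; exact fB1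
  · simp only []; rw [hv1, gcol_a c0 c1 A B X (show 1 ≤ n by omega)]; exact fAn
  · simp only []; rw [hv2, show 3 * n - 2 = 3 * (n - 1) + 1 by omega,
      gcol_x c0 c1 A B X (show 1 ≤ n - 1 by omega)]
    exact fXn1
  · simp only []; rw [hv3, gcol_b c0 c1 A B X (show 1 ≤ n by omega)]; exact fBn
  · simp only []; rw [hv4, show 3 * n - 3 = 3 * (n - 1) by omega,
      gcol_b c0 c1 A B X (show 1 ≤ n - 1 by omega)]
    exact fBn1

/-- Regime 2 `b`-walk (second coordinates of the off-diagonal chain). -/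
def r2B (n : ℕ) (cB cC c3 : Fin 3) (k : ℕ) : Fin 3 :=
  if k = 1 then c3 else if k = 2 then oth2 c3 (if (n - 1 - 3) % 2 = 0 then cB else cC)
  else if (n - 1 - k) % 2 = 0 then cB else cC

def r2A (n : ℕ) (cB cC c2 c3 w1 : Fin 3) (k : ℕ) : Fin 3 :=
  if k = 1 then c2 else if k = n then w1
  else oth2 (r2B n cB cC c3 (k - 1)) (r2B n cB cC c3 k)

def r2C (n : ℕ) (cB cC c3 w3 : Fin 3) (k : ℕ) : Fin 3 :=
  if k = n then w3 else r2B n cB cC c3 k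

lemma r2B_eval (n : ℕ) (cB cC c3 : Fin 3) {k : ℕ} (h : 3 ≤ k) :
    r2B n cB cC c3 k = if (n - 1 - k) % 2 = 0 then cB else cC := by
  simp [r2B, show k ≠ 1 by omega, show k ≠ 2 by omega]

lemma r2B_walk (n : ℕ) (cB cC c3 : Fin 3) (hCB : cC ≠ cB) {k : ℕ}
    (h1 : 1 ≤ k) (hk : k + 1 ≤ n - 1) (hn : 4 ≤ n) :
    r2B n cB cC c3 k ≠ r2B n cB cC c3 (k + 1) := by
  rcases eq_or_lt_of_le h1 with h | h
  · rw [← h]; simp [r2B]; exact Ne.symm (oth2_ne_left _ _)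
  rcases eq_or_lt_of_le (show 2 ≤ k by omega) with h2 | h2
  · rw [← h2]
    rw [show (2:ℕ) + 1 = 3 by norm_num, r2B_eval n cB cC c3 le_rfl]
    simp [r2B]
    exact oth2_ne_right _ _
  · rw [r2B_eval n cB cC c3 (by omega), r2B_eval n cB cC c3 (by omega)]
    by_cases hq : (n - 1 - k) % 2 = 0
    · have hq' : (n - 1 - (k + 1)) % 2 ≠ 0 := by omega
      simp [hq, hq']; exact hCB.symm
    · have hq' : (n - 1 - (k + 1)) % 2 = 0 := by omega
      simp [hq, hq']; exact hCB

/-- Regime 1 diagonal sequence. -/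
def r1S (n : ℕ) (cB cC c3 : Fin 3) (k : ℕ) : Fin 3 :=
  if k ≤ 2 then oth2 c3 (if (n - 1 - 3) % 2 = 0 then cB else cC)
  else if (n - 1 - k) % 2 = 0 then cB else cC

def r1A (n : ℕ) (cB cC c2 c3 w1 : Fin 3) (k : ℕ) : Fin 3 :=
  if k = 1 then c2 else if k = n then w1 else r1S n cB cC c3 k

def r1C (n : ℕ) (cB cC c3 w3 : Fin 3) (k : ℕ) : Fin 3 :=
  if k = 1 then c3 else if k = n then w3 else r1S n cB cC c3 k

def r1X (n : ℕ) (cB cC c2 c3 w2 : Fin 3) (k : ℕ) : Fin 3 :=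
  if k = 1 then oth2 c2 (r1S n cB cC c3 2)
  else if k = n - 1 then w2
  else oth2 (r1S n cB cC c3 k) (r1S n cB cC c3 (k + 1))

lemma r1S_eval (n : ℕ) (cB cC c3 : Fin 3) {k : ℕ} (h : 3 ≤ k) :
    r1S n cB cC c3 k = if (n - 1 - k) % 2 = 0 then cB else cC := by
  simp [r1S, show ¬ k ≤ 2 by omega]

lemma r1S_last (n : ℕ) (cB cC c3 : Fin 3) (hn : 4 ≤ n) :
    r1S n cB cC c3 (n - 1) = cB := by
  rw [r1S_eval n cB cC c3 (by omega)]
  simp [show (n - 1 - (n - 1)) % 2 = 0 by omega]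

lemma r1S_walk (n : ℕ) (cB cC c3 : Fin 3) (hCB : cC ≠ cB) {k : ℕ}
    (h1 : 2 ≤ k) (hk : k + 1 ≤ n - 1) (hn : 4 ≤ n) :
    r1S n cB cC c3 k ≠ r1S n cB cC c3 (k + 1) := by
  rcases eq_or_lt_of_le h1 with h | h
  · rw [← h]
    rw [show (2:ℕ) + 1 = 3 by norm_num, r1S_eval n cB cC c3 le_rfl]
    simp [r1S]
    exact oth2_ne_right _ _
  · rw [r1S_eval n cB cC c3 (by omega), r1S_eval n cB cC c3 (by omega)]
    by_cases hq : (n - 1 - k) % 2 = 0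
    · have hq' : (n - 1 - (k + 1)) % 2 ≠ 0 := by omega
      simp [hq, hq']; exact hCB.symm
    · have hq' : (n - 1 - (k + 1)) % 2 = 0 := by omega
      simp [hq, hq']; exact hCB

/-- For `n ≥ 4`, every proper 3-coloring `ψ` of the subgraph `C₁ ∪ C₂` of the reduced
Thomas-Walls graph `T'_n` that is non-dangerous on `C₁` or on `C₂` extends to a proper
3-coloring of `T'_n`. -/
theorem reducedThomasWalls_extend_nondangerous (n : ℕ) (hn : 4 ≤ n)
    (ψ : Fin (3 * n + 1) → Fin 3)
    (h1 : ψ (tw_u1 n) ≠ ψ (tw_u2 n)) (h2 : ψ (tw_u2 n) ≠ ψ (tw_u3 n))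
    (h3 : ψ (tw_u3 n) ≠ ψ (tw_u4 n)) (h4 : ψ (tw_u4 n) ≠ ψ (tw_u1 n))
    (h5 : ψ (tw_v1 n) ≠ ψ (tw_v2 n)) (h6 : ψ (tw_v2 n) ≠ ψ (tw_v3 n))
    (h7 : ψ (tw_v3 n) ≠ ψ (tw_v4 n)) (h8 : ψ (tw_v4 n) ≠ ψ (tw_v1 n))
    (hnd : (ψ (tw_u1 n) = ψ (tw_u3 n) ∧ ψ (tw_u2 n) ≠ ψ (tw_u4 n)) ∨
           (ψ (tw_v1 n) = ψ (tw_v3 n) ∧ ψ (tw_v2 n) ≠ ψ (tw_v4 n))) :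
    ∃ φ : Fin (3 * n + 1) → Fin 3,
      (∀ a b, (reducedThomasWalls n).Adj a b → φ a ≠ φ b) ∧
      φ (tw_u1 n) = ψ (tw_u1 n) ∧ φ (tw_u2 n) = ψ (tw_u2 n) ∧
      φ (tw_u3 n) = ψ (tw_u3 n) ∧ φ (tw_u4 n) = ψ (tw_u4 n) ∧
      φ (tw_v1 n) = ψ (tw_v1 n) ∧ φ (tw_v2 n) = ψ (tw_v2 n) ∧
      φ (tw_v3 n) = ψ (tw_v3 n) ∧ φ (tw_v4 n) = ψ (tw_v4 n) := by
  set c2 := ψ (tw_u2 n) with hc2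
  set c3 := ψ (tw_u4 n) with hc3
  set w1 := ψ (tw_v1 n) with hw1
  set w2 := ψ (tw_v2 n) with hw2
  set w3 := ψ (tw_v3 n) with hw3
  set cB := ψ (tw_v4 n) with hcB
  set cC := oth2 cB cB with hcC
  have hCB : cC ≠ cB := oth2_ne_left cB cB
  by_cases hc : w2 = cB
  · -- Regime 2: the chain stays off-diagonal.
    have hne23 : c2 ≠ c3 := by
      rcases hnd with ⟨-, h⟩ | ⟨-, h⟩
      · exact h
      · exact absurd hc h
    have Bn1 : r2B n cB cC c3 (n - 1) = cB := by
      rw [r2B_eval n cB cC c3 (by omega)]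
      simp [show (n - 1 - (n - 1)) % 2 = 0 by omega]
    have eA : ∀ k, 1 ≤ k → k < n → r2A n cB cC c2 c3 w1 k ≠ r2B n cB cC c3 k := by
      intro k hk1 hk2
      by_cases h : k = 1
      · subst h; simp [r2A, r2B]; exact hne23
      · simp [r2A, h, show k ≠ n by omega]; exact oth2_ne_right _ _
    have eX1 : ∀ k, 1 ≤ k → k < n →
        r2B n cB cC c3 k ≠ r2A n cB cC c2 c3 w1 (k + 1) := by
      intro k hk1 hk2
      by_cases h : k + 1 = n
      · simp [r2A, h, show n ≠ 1 by omega]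
        rw [show k = n - 1 by omega, Bn1]; exact h8
      · simp [r2A, h, show k + 1 ≠ 1 by omega, show k ≠ 0 by omega]
        exact Ne.symm (oth2_ne_left _ _)
    have eX2 : ∀ k, 1 ≤ k → k < n →
        r2B n cB cC c3 k ≠ r2C n cB cC c3 w3 (k + 1) := by
      intro k hk1 hk2
      by_cases h : k + 1 = n
      · simp [r2C, h]
        rw [show k = n - 1 by omega, Bn1]; exact Ne.symm h7
      · simp [r2C, h]
        exact r2B_walk n cB cC c3 hCB hk1 (by omega) hn
    have eB1 : ∀ k, 1 ≤ k → k < n →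
        r2C n cB cC c3 w3 k ≠ r2A n cB cC c2 c3 w1 (k + 1) := by
      intro k hk1 hk2
      simp only [r2C, if_neg (show k ≠ n by omega)]
      exact eX1 k hk1 hk2
    have eB2 : ∀ k, 1 ≤ k → k < n →
        r2C n cB cC c3 w3 k ≠ r2C n cB cC c3 w3 (k + 1) := by
      intro k hk1 hk2
      simp only [r2C, if_neg (show k ≠ n by omega)]
      exact eX2 k hk1 hk2
    have e1 : ψ (tw_u1 n) ≠ r2A n cB cC c2 c3 w1 1 := by simp [r2A]; exact h1
    have e2 : ψ (tw_u1 n) ≠ r2C n cB cC c3 w3 1 := by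
      simp [r2C, show (1:ℕ) ≠ n by omega, r2B]; exact Ne.symm h4
    have e3 : ψ (tw_u3 n) ≠ r2A n cB cC c2 c3 w1 1 := by simp [r2A]; exact Ne.symm h2
    have e4 : ψ (tw_u3 n) ≠ r2C n cB cC c3 w3 1 := by
      simp [r2C, show (1:ℕ) ≠ n by omega, r2B]; exact h3
    exact gcol_extend n hn ψ (r2A n cB cC c2 c3 w1) (r2C n cB cC c3 w3) (r2B n cB cC c3)
      e1 e2 e3 e4 eA eB1 eB2 eX1 eX2
      (by simp [r2A, hc2])
      (by simp [r2C, show (1:ℕ) ≠ n by omega, r2B, hc3])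
      (by simp [r2A, show n ≠ 1 by omega, hw1])
      (by simp [r2C, hw3])
      (by simp only [r2C, if_neg (show n - 1 ≠ n by omega)]; exact Bn1)
      (by rw [Bn1]; exact hc.symm)
  · -- Regime 1: go diagonal in the middle.
    have S2 : r1S n cB cC c3 2 = oth2 c3 (if (n - 1 - 3) % 2 = 0 then cB else cC) := by
      simp [r1S]
    have Sn1 : r1S n cB cC c3 (n - 1) = cB := r1S_last n cB cC c3 hn
    have hA2 : r1A n cB cC c2 c3 w1 2 = r1S n cB cC c3 2 := by
      simp [r1A, show (2:ℕ) ≠ 1 by omega, show (2:ℕ) ≠ n by omega]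
    have hC2 : r1C n cB cC c3 w3 2 = r1S n cB cC c3 2 := by
      simp [r1C, show (2:ℕ) ≠ 1 by omega, show (2:ℕ) ≠ n by omega]
    have eA : ∀ k, 1 ≤ k → k < n → r1A n cB cC c2 c3 w1 k ≠ r1X n cB cC c2 c3 w2 k := by
      intro k hk1 hk2
      by_cases h : k = 1
      · subst h; simp [r1A, r1X]; exact Ne.symm (oth2_ne_left _ _)
      · by_cases h' : k = n - 1
        · subst h'
          simp [r1A, r1X, show n - 1 ≠ 1 by omega, show n - 1 ≠ n by omega, Sn1]
          exact Ne.symm hc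
        · simp [r1A, r1X, h, h', show k ≠ n by omega]
          exact Ne.symm (oth2_ne_left _ _)
    have eX1 : ∀ k, 1 ≤ k → k < n →
        r1X n cB cC c2 c3 w2 k ≠ r1A n cB cC c2 c3 w1 (k + 1) := by
      intro k hk1 hk2
      by_cases h : k = 1
      · subst h
        rw [show (1:ℕ) + 1 = 2 by norm_num, hA2]
        simp [r1X]; exact oth2_ne_right _ _
      · by_cases h' : k = n - 1
        · subst h'
          rw [show n - 1 + 1 = n by omega]
          simp [r1X, r1A, show n - 1 ≠ 1 by omega, show n ≠ 1 by omega]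
          exact Ne.symm h5
        · simp [r1X, r1A, h, h', show k + 1 ≠ 1 by omega, show k + 1 ≠ n by omega, show k ≠ 0 by omega]
          exact oth2_ne_right _ _
    have eX2 : ∀ k, 1 ≤ k → k < n →
        r1X n cB cC c2 c3 w2 k ≠ r1C n cB cC c3 w3 (k + 1) := by
      intro k hk1 hk2
      by_cases h : k = 1
      · subst h
        rw [show (1:ℕ) + 1 = 2 by norm_num, hC2]
        simp [r1X]; exact oth2_ne_right _ _
      · by_cases h' : k = n - 1
        · subst h'
          rw [show n - 1 + 1 = n by omega]
          simp [r1X, r1C, show n - 1 ≠ 1 by omega, show n ≠ 1 by omega]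
          exact h6
        · simp [r1X, r1C, h, h', show k + 1 ≠ 1 by omega, show k + 1 ≠ n by omega, show k ≠ 0 by omega]
          exact oth2_ne_right _ _
    have eB1 : ∀ k, 1 ≤ k → k < n →
        r1C n cB cC c3 w3 k ≠ r1A n cB cC c2 c3 w1 (k + 1) := by
      intro k hk1 hk2
      by_cases h : k = 1
      · subst h
        rw [show (1:ℕ) + 1 = 2 by norm_num, hA2, S2]
        simp [r1C]; exact Ne.symm (oth2_ne_left _ _)
      · by_cases h' : k = n - 1
        · subst h'
          rw [show n - 1 + 1 = n by omega]
          simp [r1C, r1A, show n - 1 ≠ 1 by omega, show n - 1 ≠ n by omega,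
            show n ≠ 1 by omega, Sn1]
          exact h8
        · simp [r1C, r1A, h, h', show k ≠ n by omega, show k + 1 ≠ 1 by omega,
            show k + 1 ≠ n by omega, show k ≠ 0 by omega]
          exact r1S_walk n cB cC c3 hCB (by omega) (by omega) hn
    have eB2 : ∀ k, 1 ≤ k → k < n →
        r1C n cB cC c3 w3 k ≠ r1C n cB cC c3 w3 (k + 1) := by
      intro k hk1 hk2
      by_cases h : k = 1
      · subst h
        rw [show (1:ℕ) + 1 = 2 by norm_num, hC2, S2]
        simp [r1C]; exact Ne.symm (oth2_ne_left _ _)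
      · by_cases h' : k = n - 1
        · subst h'
          rw [show n - 1 + 1 = n by omega]
          simp [r1C, show n - 1 ≠ 1 by omega, show n - 1 ≠ n by omega,
            show n ≠ 1 by omega, Sn1]
          exact Ne.symm h7
        · simp [r1C, h, h', show k ≠ n by omega, show k + 1 ≠ 1 by omega,
            show k + 1 ≠ n by omega, show k ≠ 0 by omega]
          exact r1S_walk n cB cC c3 hCB (by omega) (by omega) hn
    have e1 : ψ (tw_u1 n) ≠ r1A n cB cC c2 c3 w1 1 := by simp [r1A]; exact h1
    have e2 : ψ (tw_u1 n) ≠ r1C n cB cC c3 w3 1 := by simp [r1C]; exact Ne.symm h4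
    have e3 : ψ (tw_u3 n) ≠ r1A n cB cC c2 c3 w1 1 := by simp [r1A]; exact Ne.symm h2
    have e4 : ψ (tw_u3 n) ≠ r1C n cB cC c3 w3 1 := by simp [r1C]; exact h3
    exact gcol_extend n hn ψ (r1A n cB cC c2 c3 w1) (r1C n cB cC c3 w3)
      (r1X n cB cC c2 c3 w2)
      e1 e2 e3 e4 eA eB1 eB2 eX1 eX2
      (by simp [r1A, hc2])
      (by simp [r1C, hc3])
      (by simp [r1A, show n ≠ 1 by omega, hw1])
      (by simp [r1C, show n ≠ 1 by omega, hw3])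
      (by simp only [r1C, if_neg (show n - 1 ≠ 1 by omega),
            if_neg (show n - 1 ≠ n by omega)]; exact Sn1)
      (by simp [r1X, show n - 1 ≠ 1 by omega, hw2])
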